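/- arXiv:1808.03821 — 3 statements merged into one kernel-verified Lean document; each statement's English description precedes it below -/
import Mathlib

section
/- Let μ be a function on finite subsets of a set V that is non-negative and additive over disjoint unions. If E₂ ⊆ V satisfies μ(E₂) ≤ μ(E₂ ⊕ E) for all E in a fixed collection C ⊆ P(V), then every subset E₁ ⊆ E₂ also satisfies μ(E₁) ≤ μ(E₁ ⊕ E) for all E ∈ C. -/
theorem subset_of_reduced_is_reduced {V : Type*} [DecidableEq V]
    (μ : Finset V → ℝ)
    (hadd : ∀ X Y : Finset V, Disjoint X Y → μ (X ∪ Y) = μ X + μ Y)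
    (hnn : ∀ X : Finset V, 0 ≤ μ X)
    (C : Set (Finset V)) (E₁ E₂ : Finset V) (hsub : E₁ ⊆ E₂)
    (hmin : ∀ E ∈ C, μ E₂ ≤ μ (symmDiff E₂ E)) :
    ∀ E ∈ C, μ E₁ ≤ μ (symmDiff E₁ E) := by
  intro E hE
  have h2 := hmin E hE
  set D := E₂ \ E₁ with hD
  -- split μ over intersection/difference with E
  have hsplit : ∀ X : Finset V, μ X = μ (X ∩ E) + μ (X \ E) := by
    intro X
    have hdisj : Disjoint (X ∩ E) (X \ E) := by
      apply Finset.disjoint_left.mpr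
      intro a ha hb
      exact (Finset.mem_sdiff.mp hb).2 (Finset.mem_inter.mp ha).2
    have hu : (X ∩ E) ∪ (X \ E) = X := by
      ext a; simp [Finset.mem_inter, Finset.mem_sdiff]; tauto
    conv_lhs => rw [← hu]
    rw [hadd _ _ hdisj]
  have hsd : ∀ X : Finset V, μ (symmDiff X E) = μ (X \ E) + μ (E \ X) := by
    intro X
    have hdisj : Disjoint (X \ E) (E \ X) := by
      apply Finset.disjoint_left.mpr
      intro a ha hb
      exact (Finset.mem_sdiff.mp hb).2 (Finset.mem_sdiff.mp ha).1
    rw [symmDiff_def, Finset.sup_eq_union, hadd _ _ hdisj]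
  -- decompositions relative to D
  have h1 : μ (E₂ ∩ E) = μ (E₁ ∩ E) + μ (D ∩ E) := by
    have hdisj : Disjoint (E₁ ∩ E) (D ∩ E) := by
      apply Finset.disjoint_left.mpr
      intro a ha hb
      exact (Finset.mem_sdiff.mp (Finset.mem_inter.mp hb).1).2 (Finset.mem_inter.mp ha).1
    have hu : (E₁ ∩ E) ∪ (D ∩ E) = E₂ ∩ E := by
      ext a
      simp only [Finset.mem_union, Finset.mem_inter, hD, Finset.mem_sdiff]
      constructor
      · rintro (⟨h, he⟩ | ⟨⟨h, _⟩, he⟩) <;> exact ⟨by first | exact hsub h | exact h, he⟩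
      · rintro ⟨h2, he⟩
        by_cases h1 : a ∈ E₁
        · exact Or.inl ⟨h1, he⟩
        · exact Or.inr ⟨⟨h2, h1⟩, he⟩
    conv_lhs => rw [← hu]
    rw [hadd _ _ hdisj]
  have h3 : μ (E₂ \ E) = μ (E₁ \ E) + μ (D \ E) := by
    have hdisj : Disjoint (E₁ \ E) (D \ E) := by
      apply Finset.disjoint_left.mpr
      intro a ha hb
      exact (Finset.mem_sdiff.mp (Finset.mem_sdiff.mp hb).1).2 (Finset.mem_sdiff.mp ha).1
    have hu : (E₁ \ E) ∪ (D \ E) = E₂ \ E := by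
      ext a
      simp only [Finset.mem_union, hD, Finset.mem_sdiff]
      constructor
      · rintro (⟨h, he⟩ | ⟨⟨h, _⟩, he⟩) <;> exact ⟨by first | exact hsub h | exact h, he⟩
      · rintro ⟨h2, he⟩
        by_cases h1 : a ∈ E₁
        · exact Or.inl ⟨h1, he⟩
        · exact Or.inr ⟨⟨h2, h1⟩, he⟩
    conv_lhs => rw [← hu]
    rw [hadd _ _ hdisj]
  have h4 : μ (E \ E₁) = μ (D ∩ E) + μ (E \ E₂) := by
    have hdisj : Disjoint (D ∩ E) (E \ E₂) := by
      apply Finset.disjoint_left.mpr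
      intro a ha hb
      exact (Finset.mem_sdiff.mp hb).2 (Finset.mem_sdiff.mp (Finset.mem_inter.mp ha).1).1
    have hu : (D ∩ E) ∪ (E \ E₂) = E \ E₁ := by
      ext a
      simp only [Finset.mem_union, Finset.mem_inter, hD, Finset.mem_sdiff]
      constructor
      · rintro (⟨⟨h2, h1⟩, he⟩ | ⟨he, h2⟩) <;> exact ⟨he, by first | exact h1 | exact fun h => h2 (hsub h)⟩
      · rintro ⟨he, h1⟩
        by_cases h2 : a ∈ E₂
        · exact Or.inl ⟨⟨h2, h1⟩, he⟩
        · exact Or.inr ⟨he, h2⟩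
    conv_lhs => rw [← hu]
    rw [hadd _ _ hdisj]
  have key := h2
  rw [hsplit E₂, hsd E₂, h1, h3] at key
  rw [hsplit E₁, hsd E₁, h4]
  have := hnn (D ∩ E)
  linarith
end

section
/- Let V and C_X be finite sets, Γ_X : V → P(C_X) with |Γ_X(v)| ≤ d_B for all v, and let D be a random subset of C_X satisfying ℙ[T ⊆ D] ≤ q^{|T|} for all T ⊆ C_X, with 0 < q < 1. Fix W ⊆ V and c₀ > 0, and let p₁ := 2^{d_B h(1/(d_B c₀))} q^{1/c₀} where h is binary entropy; assume p₁ < 1. Then ℙ[|W| ≤ c₀ |D ∩ Γ_X(W)|] ≤ p₁^{|W|} / (1 − p₁^{c₀}). -/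
/-- The binary entropy function, with `h 0 = h 1 = 0` (using `Real.logb 2 0 = 0`). -/
noncomputable def binH (x : ℝ) : ℝ :=
  -(x * Real.logb 2 x) - (1 - x) * Real.logb 2 (1 - x)

lemma choose_mul_pow_le_one (x : ℝ) (hx0 : 0 ≤ x) (hx1 : x ≤ 1) (n k : ℕ) (hk : k ≤ n) :
    (n.choose k : ℝ) * (x ^ k * (1 - x) ^ (n - k)) ≤ 1 := by
  have h1 : (∑ i ∈ Finset.range (n + 1), x ^ i * (1 - x) ^ (n - i) * (n.choose i : ℝ)) = 1 := by
    rw [← add_pow]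
    norm_num
  have h2 : x ^ k * (1 - x) ^ (n - k) * (n.choose k : ℝ)
      ≤ ∑ i ∈ Finset.range (n + 1), x ^ i * (1 - x) ^ (n - i) * (n.choose i : ℝ) := by
    apply Finset.single_le_sum (f := fun i => x ^ i * (1 - x) ^ (n - i) * (n.choose i : ℝ))
    · intro i _
      have : (0:ℝ) ≤ 1 - x := by linarith
      positivity
    · exact Finset.mem_range.mpr (Nat.lt_succ_of_le hk)
  nlinarith [h2, h1]

lemma choose_le_two_rpow (x : ℝ) (hx0 : 0 < x) (n k : ℕ) (hk : k ≤ n)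
    (hnx : (n : ℝ) * x ≤ k) :
    (n.choose k : ℝ) ≤ (2 : ℝ) ^ ((k : ℝ) * (binH x / x)) := by
  rcases lt_trichotomy x 1 with hx1 | hx1 | hx1
  · -- main case 0 < x < 1
    have hy0 : (0:ℝ) < 1 - x := by linarith
    have hpos : (0:ℝ) < x ^ k * (1 - x) ^ (n - k) := by positivity
    have hb := choose_mul_pow_le_one x hx0.le hx1.le n k hk
    have hchoose : (n.choose k : ℝ) ≤ 1 / (x ^ k * (1 - x) ^ (n - k)) := by
      rw [le_div_iff₀ hpos]
      linarith
    refine hchoose.trans ?_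
    have hlogy : Real.log (1 - x) < 0 := Real.log_neg hy0 (by linarith)
    have hL : (0:ℝ) < Real.log 2 := Real.log_pos (by norm_num)
    have hcast : ((n - k : ℕ) : ℝ) = (n : ℝ) - (k : ℝ) := by
      push_cast [Nat.cast_sub hk]
      ring
    -- key inequality
    have hdiv : ((n : ℝ) - k) ≤ (k : ℝ) * (1 - x) / x := by
      rw [le_div_iff₀ hx0]
      nlinarith
    have hkey : ((n : ℝ) - k) * (-Real.log (1 - x))
        ≤ ((k : ℝ) * (1 - x) / x) * (-Real.log (1 - x)) :=
      mul_le_mul_of_nonneg_right hdiv (by linarith)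
    rw [Real.le_rpow_iff_log_le (by positivity) (by norm_num)]
    have hlhs : Real.log (1 / (x ^ k * (1 - x) ^ (n - k)))
        = -((k : ℝ) * Real.log x + ((n : ℝ) - k) * Real.log (1 - x)) := by
      rw [one_div, Real.log_inv, Real.log_mul (by positivity) (by positivity),
        Real.log_pow, Real.log_pow, hcast]
    have hrhs : (k : ℝ) * (binH x / x) * Real.log 2
        = -((k : ℝ) * Real.log x) - ((k : ℝ) * (1 - x) / x) * Real.log (1 - x) := by
      simp only [binH, Real.logb]
      field_simp
    rw [hlhs, hrhs]
    linarith
  · -- x = 1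
    subst hx1
    have hkn : (n : ℝ) ≤ (k : ℝ) := by linarith
    have : n = k := le_antisymm (by exact_mod_cast hkn) hk
    subst this
    simp [binH]
  · -- x > 1 : forces n = 0
    have hn0 : n = 0 := by
      by_contra h
      have h1 : (1:ℝ) ≤ (n : ℝ) := by
        exact_mod_cast Nat.one_le_iff_ne_zero.mpr h
      have : (n : ℝ) < (n : ℝ) * x := by nlinarith
      have : (n : ℝ) < (k : ℝ) := lt_of_lt_of_le this hnx
      have : (k : ℝ) ≤ (n : ℝ) := by exact_mod_cast hk
      linarith
    subst hn0
    interval_cases k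
    simp

theorem witness_probability_bound {V CX : Type*} [Fintype V] [Fintype CX]
    [DecidableEq V] [DecidableEq CX]
    (μ : Finset CX → ℝ) (hμnn : ∀ A, 0 ≤ μ A) (hμ1 : ∑ A : Finset CX, μ A = 1)
    (ΓX : V → Finset CX) (dB : ℕ) (hdB : 1 ≤ dB)
    (hΓ : ∀ v : V, (ΓX v).card ≤ dB)
    (q : ℝ) (hq0 : 0 < q) (hq1 : q < 1)
    (hls : ∀ T : Finset CX,
      ∑ A ∈ Finset.univ.filter (fun A : Finset CX => T ⊆ A), μ A ≤ q ^ T.card)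
    (W : Finset V) (c₀ : ℝ) (hc₀ : 0 < c₀)
    (p₁ : ℝ) (hp₁def : p₁ = 2 ^ ((dB : ℝ) * binH (1 / ((dB : ℝ) * c₀))) * q ^ (1 / c₀))
    (hp₁ : p₁ < 1) :
    ∑ A ∈ Finset.univ.filter
        (fun A : Finset CX => (W.card : ℝ) ≤ c₀ * ((A ∩ W.biUnion ΓX).card : ℝ)), μ A
      ≤ p₁ ^ (W.card : ℝ) / (1 - p₁ ^ c₀) := by
  classical
  set Γ : Finset CX := W.biUnion ΓX with hGdef
  set m : ℕ := W.card with hmdef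
  set n : ℕ := Γ.card with hndef
  have hdBpos : (0:ℝ) < (dB : ℝ) := by exact_mod_cast hdB
  have hn : (n : ℝ) ≤ (dB : ℝ) * (m : ℝ) := by
    have h1 : n ≤ ∑ v ∈ W, (ΓX v).card := Finset.card_biUnion_le
    have h2 : ∑ v ∈ W, (ΓX v).card ≤ ∑ _v ∈ W, dB :=
      Finset.sum_le_sum fun v _ => hΓ v
    have h3 : n ≤ m * dB := by
      calc n ≤ ∑ v ∈ W, (ΓX v).card := h1
        _ ≤ ∑ _v ∈ W, dB := h2
        _ = m * dB := by rw [Finset.sum_const, smul_eq_mul]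
    have := h3
    push_cast
    nlinarith [this, (by exact_mod_cast this : (n:ℝ) ≤ (m:ℝ) * (dB:ℝ))]
  have hp₁pos : 0 < p₁ := by rw [hp₁def]; positivity
  set x : ℝ := 1 / ((dB : ℝ) * c₀) with hxdef
  have hdc : (0:ℝ) < (dB:ℝ) * c₀ := by positivity
  have hx0 : 0 < x := by rw [hxdef]; positivity
  set s : ℝ := p₁ ^ c₀ with hsdef
  have hs0 : 0 < s := Real.rpow_pos_of_pos hp₁pos c₀
  have hs1 : s < 1 := Real.rpow_lt_one hp₁pos.le hp₁ hc₀
  have h1s : (0:ℝ) < 1 - s := by linarith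
  have hseq : s = 2 ^ (binH x / x) * q := by
    rw [hsdef, hp₁def, Real.mul_rpow (by positivity) (by positivity),
      ← Real.rpow_mul (by norm_num : (0:ℝ) ≤ 2), ← Real.rpow_mul hq0.le]
    congr 1
    · congr 1
      rw [hxdef]
      field_simp
    · rw [one_div, inv_mul_cancel₀ hc₀.ne', Real.rpow_one]
  -- per-k bound
  have hM : ∀ k : ℕ, k ≤ n → (m : ℝ) ≤ c₀ * (k : ℝ) → (n.choose k : ℝ) * q ^ k ≤ s ^ k := by
    intro k hkn hck
    have hnx : (n : ℝ) * x ≤ (k : ℝ) := by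
      rw [hxdef, mul_one_div, div_le_iff₀ hdc]
      nlinarith [hn, hck, hdBpos]
    have h1 := choose_le_two_rpow x hx0 n k hkn hnx
    calc (n.choose k : ℝ) * q ^ k
        ≤ (2:ℝ) ^ ((k : ℝ) * (binH x / x)) * q ^ k :=
          mul_le_mul_of_nonneg_right h1 (by positivity)
      _ = s ^ k := by
          rw [hseq, mul_pow]
          congr 1
          rw [mul_comm ((k:ℝ)), Real.rpow_mul (by norm_num : (0:ℝ) ≤ 2),
            Real.rpow_natCast]
  set S : Finset (Finset CX) :=
    Finset.univ.filter (fun A : Finset CX => (m : ℝ) ≤ c₀ * ((A ∩ Γ).card : ℝ)) with hSdef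
  set P : Finset (Finset CX) :=
    Γ.powerset.filter (fun T => (m : ℝ) ≤ c₀ * (T.card : ℝ)) with hPdef
  set K : Finset ℕ :=
    (Finset.range (n + 1)).filter (fun k => (m : ℝ) ≤ c₀ * (k : ℝ)) with hKdef
  have hmap1 : ∀ A ∈ S, A ∩ Γ ∈ P := by
    intro A hA
    simp only [hSdef, Finset.mem_filter, Finset.mem_univ, true_and] at hA
    simp only [hPdef, Finset.mem_filter, Finset.mem_powerset]
    exact ⟨Finset.inter_subset_right, hA⟩
  have step1 : ∑ A ∈ S, μ A ≤ ∑ T ∈ P, q ^ T.card := by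
    rw [← Finset.sum_fiberwise_of_maps_to hmap1 μ]
    apply Finset.sum_le_sum
    intro T hT
    refine le_trans ?_ (hls T)
    apply Finset.sum_le_sum_of_subset_of_nonneg
    · intro A hA
      simp only [Finset.mem_filter, Finset.mem_univ, true_and] at hA ⊢
      rw [← hA.2]
      exact Finset.inter_subset_left
    · intro A _ _
      exact hμnn A
  have hmap2 : ∀ T ∈ P, T.card ∈ K := by
    intro T hT
    simp only [hPdef, Finset.mem_filter, Finset.mem_powerset] at hT
    simp only [hKdef, Finset.mem_filter, Finset.mem_range]
    exact ⟨Nat.lt_succ_of_le (Finset.card_le_card hT.1), hT.2⟩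
  have step2 : ∑ T ∈ P, q ^ T.card = ∑ k ∈ K, (n.choose k : ℝ) * q ^ k := by
    rw [← Finset.sum_fiberwise_of_maps_to hmap2 (fun T => q ^ T.card)]
    apply Finset.sum_congr rfl
    intro k hk
    simp only [hKdef, Finset.mem_filter, Finset.mem_range] at hk
    have hfe : P.filter (fun T => T.card = k) = Γ.powersetCard k := by
      ext T
      simp only [hPdef, Finset.mem_filter, Finset.mem_powerset, Finset.mem_powersetCard]
      constructor
      · rintro ⟨⟨h1, _⟩, h3⟩
        exact ⟨h1, h3⟩
      · rintro ⟨h1, h2⟩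
        exact ⟨⟨h1, by rw [h2]; exact hk.2⟩, h2⟩
    rw [hfe,
      Finset.sum_congr rfl (fun T hT => by rw [(Finset.mem_powersetCard.mp hT).2]),
      Finset.sum_const, Finset.card_powersetCard, nsmul_eq_mul]
  have step3 : ∑ k ∈ K, (n.choose k : ℝ) * q ^ k ≤ ∑ k ∈ K, s ^ k := by
    apply Finset.sum_le_sum
    intro k hk
    simp only [hKdef, Finset.mem_filter, Finset.mem_range] at hk
    exact hM k (Nat.lt_succ_iff.mp hk.1) hk.2
  set k₀ : ℕ := ⌈(m : ℝ) / c₀⌉₊ with hk₀def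
  have step4 : ∑ k ∈ K, s ^ k ≤ ∑ k ∈ Finset.Ico k₀ (n + 1), s ^ k := by
    apply Finset.sum_le_sum_of_subset_of_nonneg
    · intro k hk
      simp only [hKdef, Finset.mem_filter, Finset.mem_range] at hk
      simp only [Finset.mem_Ico]
      refine ⟨Nat.ceil_le.mpr ?_, hk.1⟩
      rw [div_le_iff₀ hc₀]
      nlinarith [hk.2]
    · intro k _ _
      positivity
  have geo : ∀ N : ℕ, ∑ j ∈ Finset.range N, s ^ j ≤ 1 / (1 - s) := by
    intro N
    have h2 := geom_sum_mul s N
    have hpow : (0:ℝ) ≤ s ^ N := by positivity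
    rw [le_div_iff₀ h1s]
    nlinarith [h2]
  have step5 : ∑ k ∈ Finset.Ico k₀ (n + 1), s ^ k ≤ s ^ k₀ * (1 / (1 - s)) := by
    rcases le_or_gt (n + 1) k₀ with h | h
    · rw [Finset.Ico_eq_empty (by omega), Finset.sum_empty]
      positivity
    · rw [Finset.sum_Ico_eq_sum_range]
      simp_rw [pow_add, ← Finset.mul_sum]
      exact mul_le_mul_of_nonneg_left (geo _) (by positivity)
  have hk₀ : (m : ℝ) ≤ c₀ * (k₀ : ℝ) := by
    have h := Nat.le_ceil ((m : ℝ) / c₀)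
    rw [div_le_iff₀ hc₀] at h
    rw [hk₀def]
    nlinarith [h]
  have hsk : s ^ k₀ ≤ p₁ ^ (m : ℝ) := by
    have h1 : s ^ k₀ = p₁ ^ (c₀ * (k₀ : ℝ)) := by
      rw [hsdef, ← Real.rpow_natCast (p₁ ^ c₀) k₀, ← Real.rpow_mul hp₁pos.le]
    rw [h1]
    exact Real.rpow_le_rpow_of_exponent_ge hp₁pos hp₁.le hk₀
  calc ∑ A ∈ S, μ A ≤ ∑ T ∈ P, q ^ T.card := step1
    _ = ∑ k ∈ K, (n.choose k : ℝ) * q ^ k := step2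
    _ ≤ ∑ k ∈ K, s ^ k := step3
    _ ≤ ∑ k ∈ Finset.Ico k₀ (n + 1), s ^ k := step4
    _ ≤ s ^ k₀ * (1 / (1 - s)) := step5
    _ ≤ p₁ ^ (m : ℝ) * (1 / (1 - s)) :=
        mul_le_mul_of_nonneg_right hsk (by positivity)
    _ = p₁ ^ (m : ℝ) / (1 - s) := by ring
end

section
/- Let H be an n_B × n_A binary matrix, and define H_X = (I_{n_A} ⊗ H, Hᵀ ⊗ I_{n_B}) and H_Z = (H ⊗ I_{n_A}, I_{n_B} ⊗ Hᵀ) as block matrices over 𝔽₂. Then H_X · H_Zᵀ = 0. -/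
open Kronecker Matrix

theorem hypergraph_product_css_orthogonality (nA nB : ℕ)
    (H : Matrix (Fin nB) (Fin nA) (ZMod 2)) :
    Matrix.fromCols ((1 : Matrix (Fin nA) (Fin nA) (ZMod 2)) ⊗ₖ H)
        (Hᵀ ⊗ₖ (1 : Matrix (Fin nB) (Fin nB) (ZMod 2))) *
      (Matrix.fromCols (H ⊗ₖ (1 : Matrix (Fin nA) (Fin nA) (ZMod 2)))
        ((1 : Matrix (Fin nB) (Fin nB) (ZMod 2)) ⊗ₖ Hᵀ))ᵀ = 0 := by
  rw [transpose_fromCols, fromCols_mul_fromRows,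
    ← Matrix.kroneckerMap_transpose, ← Matrix.kroneckerMap_transpose,
    transpose_one, transpose_one, transpose_transpose,
    ← Matrix.mul_kronecker_mul, ← Matrix.mul_kronecker_mul,
    Matrix.one_mul, Matrix.mul_one, Matrix.one_mul, Matrix.mul_one]
  ext i j; simp [CharTwo.add_self_eq_zero]
end
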